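/- Let g ≥ 1 be a natural number. For any two subspaces H and H' of ℚ^{2g} (with coordinates indexed by Fin g ⊕ Fin g) each of dimension 2g−1, there exists an integer matrix S in the symplectic group Sp(2g, ℤ) (that is, a (2g)×(2g) integer matrix satisfying Sᵀ J S = J, where J is the standard symplectic matrix) such that the linear automorphism of ℚ^{2g} induced by S maps H' onto H. That is, Sp(2g, ℤ) acts transitively on the set of hyperplanes of ℚ^{2g}. -/

import Mathlib

open Matrix

set_option linter.unusedSectionVars false

variable {g : ℕ}

section RankOne
variable {ι : Type*} [Fintype ι]

lemma vecMulVec_mul_mat (a b : ι → ℤ) (C : Matrix ι ι ℤ) :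
    vecMulVec a b * C = vecMulVec a (vecMul b C) := by
  ext i j
  simp only [mul_apply, vecMulVec_apply, vecMul, dotProduct, Finset.mul_sum]
  exact Finset.sum_congr rfl fun k _ => by ring

lemma mat_mul_vecMulVec (C : Matrix ι ι ℤ) (a b : ι → ℤ) :
    C * vecMulVec a b = vecMulVec (C.mulVec a) b := by
  ext i j
  simp only [mul_apply, vecMulVec_apply, mulVec, dotProduct, Finset.sum_mul]
  exact Finset.sum_congr rfl fun k _ => by ring

lemma vecMulVec_mul_vecMulVec (a b c d : ι → ℤ) :
    vecMulVec a b * vecMulVec c d = (b ⬝ᵥ c) • vecMulVec a d := by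
  ext i j
  simp only [mul_apply, vecMulVec_apply, dotProduct, Matrix.smul_apply, Finset.sum_mul, smul_eq_mul]
  exact Finset.sum_congr rfl fun k _ => by ring

lemma vecMulVec_transpose' (a b : ι → ℤ) : (vecMulVec a b)ᵀ = vecMulVec b a := by
  ext i j; simp [vecMulVec_apply, mul_comm]

end RankOne

/-- symplectic transvection -/
def tv (g : ℕ) (u : (Fin g ⊕ Fin g) → ℤ) (c : ℤ) : Matrix (Fin g ⊕ Fin g) (Fin g ⊕ Fin g) ℤ :=
  1 + c • vecMulVec u (vecMul u (Matrix.J (Fin g) ℤ))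

lemma J_mul_Jt : Matrix.J (Fin g) ℤ * (Matrix.J (Fin g) ℤ)ᵀ = 1 := by
  rw [Matrix.J_transpose, Matrix.mul_neg, Matrix.J_squared, neg_neg]

lemma uJu (u : (Fin g ⊕ Fin g) → ℤ) : u ⬝ᵥ vecMul u (Matrix.J (Fin g) ℤ) = 0 := by
  have h1 : u ⬝ᵥ vecMul u (Matrix.J (Fin g) ℤ) = vecMul u (Matrix.J (Fin g) ℤ) ⬝ᵥ u :=
    dotProduct_comm _ _
  have h2 : vecMul u (Matrix.J (Fin g) ℤ) ⬝ᵥ u = u ⬝ᵥ mulVec (Matrix.J (Fin g) ℤ) u :=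
    (Matrix.dotProduct_mulVec u _ u).symm
  have h3 : mulVec (Matrix.J (Fin g) ℤ) u = -vecMul u (Matrix.J (Fin g) ℤ) := by
    rw [← Matrix.vecMul_transpose, Matrix.J_transpose, Matrix.vecMul_neg]
  rw [h3, dotProduct_neg] at h2
  omega

theorem tv_mem (u : (Fin g ⊕ Fin g) → ℤ) (c : ℤ) :
    tv g u c ∈ Matrix.symplecticGroup (Fin g) ℤ := by
  rw [SymplecticGroup.mem_iff]
  set Jm := Matrix.J (Fin g) ℤ with hJ
  set M := vecMulVec u (vecMul u Jm) with hM
  have hMT : Mᵀ = vecMulVec (vecMul u Jm) u := vecMulVec_transpose' _ _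
  have hMJ : M * Jm = -vecMulVec u u := by
    rw [hM, vecMulVec_mul_mat, Matrix.vecMul_vecMul, Matrix.J_squared]
    ext i j; simp [vecMulVec_apply, Matrix.vecMul_neg]
  have hJMT : Jm * Mᵀ = vecMulVec u u := by
    rw [hMT, mat_mul_vecMulVec]
    congr 1
    have h1 : vecMul u Jm = Jmᵀ.mulVec u := by rw [Matrix.mulVec_transpose]
    rw [h1, Matrix.mulVec_mulVec, J_mul_Jt, Matrix.one_mulVec]
  have hMJMT : M * Jm * Mᵀ = 0 := by
    rw [hMJ, hMT, Matrix.neg_mul, _root_.vecMulVec_mul_vecMulVec, uJu]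
    simp
  have expand : (1 + c • M) * Jm * (1 + c • M)ᵀ
      = Jm + c • (M * Jm) + c • (Jm * Mᵀ) + (c * c) • (M * Jm * Mᵀ) := by
    rw [transpose_add, transpose_one, transpose_smul]
    rw [Matrix.add_mul, Matrix.one_mul, Matrix.add_mul, Matrix.mul_add, Matrix.mul_add]
    rw [Matrix.smul_mul, Matrix.smul_mul, Matrix.mul_smul, Matrix.mul_smul, Matrix.mul_one,
      Matrix.smul_mul, smul_smul]
    simp only [Matrix.mul_one]
    abel
  show (1 + c • M) * Jm * (1 + c • M)ᵀ = Jm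
  rw [expand, hMJMT, hMJ, hJMT]
  simp

theorem tv_mulVec (u x : (Fin g ⊕ Fin g) → ℤ) (c : ℤ) :
    (tv g u c).mulVec x = x + (c * (vecMul u (Matrix.J (Fin g) ℤ) ⬝ᵥ x)) • u := by
  rw [tv, Matrix.add_mulVec, Matrix.one_mulVec, Matrix.smul_mulVec]
  congr 1
  ext i
  simp only [mulVec, vecMulVec_apply, dotProduct, Pi.smul_apply, smul_eq_mul, Finset.mul_sum,
    Finset.sum_mul]
  exact Finset.sum_congr rfl fun k _ => by ring

def Reach (g : ℕ) (v w : (Fin g ⊕ Fin g) → ℤ) : Prop :=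
  ∃ S ∈ Matrix.symplecticGroup (Fin g) ℤ, S.mulVec v = w

lemma Reach.refl (v : (Fin g ⊕ Fin g) → ℤ) : Reach g v v :=
  ⟨1, Submonoid.one_mem _, Matrix.one_mulVec v⟩

lemma Reach.trans {u v w : (Fin g ⊕ Fin g) → ℤ} (h1 : Reach g u v) (h2 : Reach g v w) :
    Reach g u w := by
  obtain ⟨S, hS, rfl⟩ := h1
  obtain ⟨T, hT, rfl⟩ := h2
  exact ⟨T * S, Submonoid.mul_mem _ hT hS, (Matrix.mulVec_mulVec _ _ _).symm⟩

lemma Reach.symm {v w : (Fin g ⊕ Fin g) → ℤ} (h : Reach g v w) : Reach g w v := by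
  obtain ⟨S, hS, rfl⟩ := h
  refine ⟨-Matrix.J (Fin g) ℤ * Sᵀ * Matrix.J (Fin g) ℤ,
    Submonoid.mul_mem _ (Submonoid.mul_mem _ (SymplecticGroup.neg_mem (SymplecticGroup.J_mem _ _))
      (SymplecticGroup.transpose_mem hS)) (SymplecticGroup.J_mem _ _), ?_⟩
  rw [Matrix.mulVec_mulVec]
  have : -Matrix.J (Fin g) ℤ * Sᵀ * Matrix.J (Fin g) ℤ * S = 1 := by
    have := SymplecticGroup.inv_left_mul_aux hS
    calc -Matrix.J (Fin g) ℤ * Sᵀ * Matrix.J (Fin g) ℤ * S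
        = -(Matrix.J (Fin g) ℤ * Sᵀ * Matrix.J (Fin g) ℤ * S) := by
          simp [Matrix.neg_mul]
      _ = 1 := this
  rw [this, Matrix.one_mulVec]

lemma Reach.tv_step (u x : (Fin g ⊕ Fin g) → ℤ) (c : ℤ) :
    Reach g x (x + (c * (vecMul u (Matrix.J (Fin g) ℤ) ⬝ᵥ x)) • u) :=
  ⟨tv g u c, tv_mem u c, tv_mulVec u x c⟩

lemma IsPrimreach {v w : (Fin g ⊕ Fin g) → ℤ} (h : Reach g v w)
    (hp : ∃ z, z ⬝ᵥ v = 1) : ∃ z, z ⬝ᵥ w = 1 := by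
  obtain ⟨S, hS, rfl⟩ := h
  obtain ⟨z, hz⟩ := hp
  refine ⟨vecMul z (-Matrix.J (Fin g) ℤ * Sᵀ * Matrix.J (Fin g) ℤ), ?_⟩
  rw [Matrix.dotProduct_mulVec, Matrix.vecMul_vecMul]
  have : -Matrix.J (Fin g) ℤ * Sᵀ * Matrix.J (Fin g) ℤ * S = 1 := by
    have := SymplecticGroup.inv_left_mul_aux hS
    calc -Matrix.J (Fin g) ℤ * Sᵀ * Matrix.J (Fin g) ℤ * S
        = -(Matrix.J (Fin g) ℤ * Sᵀ * Matrix.J (Fin g) ℤ * S) := by simp [Matrix.neg_mul]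
      _ = 1 := this
  rw [this, Matrix.vecMul_one, hz]

-- ω computations for single / sums of singles
lemma vecMul_single_J (p : Fin g ⊕ Fin g) (x : (Fin g ⊕ Fin g) → ℤ) :
    vecMul (Pi.single p 1) (Matrix.J (Fin g) ℤ) ⬝ᵥ x
      = Sum.elim (fun i => -x (Sum.inr i)) (fun i => x (Sum.inl i)) p := by
  rw [Matrix.single_one_vecMul]
  cases p with
  | inl i =>
    simp only [Sum.elim_inl]
    simp [Matrix.J, dotProduct, Matrix.fromBlocks_apply₁₁, Fintype.sum_sum_type,
      Matrix.fromBlocks_apply₁₂, Pi.single_apply, Matrix.one_apply]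
  | inr i =>
    simp only [Sum.elim_inr]
    simp [Matrix.J, dotProduct, Fintype.sum_sum_type, Pi.single_apply, Matrix.one_apply]

open Sum

lemma reach_addA (i : Fin g) (c : ℤ) (x : (Fin g ⊕ Fin g) → ℤ) :
    Reach g x (fun p => if p = inl i then x p + c * x (inr i) else x p) := by
  have := Reach.tv_step (g := g) (Pi.single (inl i) 1) x (-c)
  rw [vecMul_single_J] at this
  convert this using 1
  funext p
  by_cases h : p = inl i <;> simp [h, Pi.single_apply, mul_assoc]

lemma reach_addB (i : Fin g) (c : ℤ) (x : (Fin g ⊕ Fin g) → ℤ) :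
    Reach g x (fun p => if p = inr i then x p + c * x (inl i) else x p) := by
  have := Reach.tv_step (g := g) (Pi.single (inr i) 1) x c
  rw [vecMul_single_J] at this
  convert this using 1
  funext p
  by_cases h : p = inr i <;> simp [h, Pi.single_apply]

lemma reach_rot (i : Fin g) (x : (Fin g ⊕ Fin g) → ℤ) :
    Reach g x (fun p => if p = inl i then -x (inr i) else if p = inr i then x (inl i) else x p) := by
  have h1 := reach_addB i 1 x
  set x1 : (Fin g ⊕ Fin g) → ℤ :=
    fun p => if p = inr i then x p + 1 * x (inl i) else x p with hx1
  have h2 := reach_addA i (-1) x1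
  set x2 : (Fin g ⊕ Fin g) → ℤ :=
    fun p => if p = inl i then x1 p + -1 * x1 (inr i) else x1 p with hx2
  have h3 := reach_addB i 1 x2
  have h := h1.trans (h2.trans h3)
  convert h using 1
  funext p
  rcases p with a | b
  · by_cases hh : a = i <;> simp [hx2, hx1, hh] <;> ring
  · by_cases hh : b = i <;> simp [hx2, hx1, hh] <;> ring

lemma reach_cross (i j : Fin g) (hij : i ≠ j) (c : ℤ) (x : (Fin g ⊕ Fin g) → ℤ)
    (hb : x (inr i) = 0) :
    Reach g x (fun p => if p = inl i then x p + c * x (inl j) else x p) := by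
  set u1 : (Fin g ⊕ Fin g) → ℤ := Pi.single (inl i) 1 + Pi.single (inr j) 1 with hu1
  have hphi : vecMul u1 (Matrix.J (Fin g) ℤ) ⬝ᵥ x = x (inl j) := by
    rw [hu1, Matrix.add_vecMul, add_dotProduct, vecMul_single_J, vecMul_single_J]
    simp [hb]
  have h1 := Reach.tv_step (g := g) u1 x c
  rw [hphi] at h1
  set x1 : (Fin g ⊕ Fin g) → ℤ :=
    fun p => if p = inl i then x p + c * x (inl j)
      else if p = inr j then x p + c * x (inl j) else x p with hx1
  have hx1eq : x + (c * x (inl j)) • u1 = x1 := by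
    funext p
    rcases p with a | b
    · by_cases hh : a = i <;> simp [hx1, hu1, hh, Pi.single_apply]
    · by_cases hh : b = j <;> simp [hx1, hu1, hh, Pi.single_apply]
  rw [hx1eq] at h1
  have h2 := reach_addB j (-c) x1
  have hfix : x1 (inl j) = x (inl j) := by
    simp [hx1, hij.symm]
  refine (h1.trans h2).trans ?_
  have : (fun p => if p = inr j then x1 p + (-c) * x1 (inl j) else x1 p)
      = fun p => if p = inl i then x p + c * x (inl j) else x p := by
    funext p
    rcases p with a | b
    · by_cases hh : a = i <;> simp [hx1, hh]
    · by_cases hh : b = j <;> simp [hx1, hh, hij.symm] <;> ring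
  rw [this]
  exact Reach.refl _

def Nsum (v : (Fin g ⊕ Fin g) → ℤ) : ℕ := ∑ p, (v p).natAbs

lemma Nsum_update_lt (v : (Fin g ⊕ Fin g) → ℤ) (p0 : Fin g ⊕ Fin g) (r : ℤ)
    (h : r.natAbs < (v p0).natAbs) :
    Nsum (fun p => if p = p0 then r else v p) < Nsum v := by
  unfold Nsum
  refine Finset.sum_lt_sum (fun p _ => ?_) ⟨p0, Finset.mem_univ _, ?_⟩
  · by_cases hp : p = p0
    · subst hp; simp only [if_pos rfl]; omega
    · simp only [if_neg hp]; exact le_rfl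
  · simp only [if_pos rfl]; exact h

lemma emod_natAbs_lt {a b : ℤ} (hb : b ≠ 0) (hab : b.natAbs ≤ a.natAbs) :
    (a % b).natAbs < a.natAbs := by
  have h1 := Int.emod_nonneg a hb
  have h2 := Int.emod_lt a hb
  omega

lemma phase1 (n : ℕ) : ∀ v : (Fin g ⊕ Fin g) → ℤ, Nsum v ≤ n →
    ∃ w, Reach g v w ∧ ∀ i, w (inl i) = 0 ∨ w (inr i) = 0 := by
  induction n with
  | zero =>
    intro v hv
    refine ⟨v, Reach.refl v, fun i => Or.inl ?_⟩
    have : (v (inl i)).natAbs = 0 := by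
      have : (v (inl i)).natAbs ≤ Nsum v := Finset.single_le_sum (f := fun p => (v p).natAbs)
        (fun p _ => Nat.zero_le _) (Finset.mem_univ _)
      omega
    omega
  | succ n ih =>
    intro v hv
    by_cases hall : ∀ i, v (inl i) = 0 ∨ v (inr i) = 0
    · exact ⟨v, Reach.refl v, hall⟩
    · push_neg at hall
      obtain ⟨i, ha, hb⟩ := hall
      rcases le_or_gt (v (inr i)).natAbs (v (inl i)).natAbs with hle | hlt
      · -- reduce a_i mod b_i
        have hstep := reach_addA i (-(v (inl i) / v (inr i))) v
        set w := fun p => if p = inl i then v p + -(v (inl i) / v (inr i)) * v (inr i) else v p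
          with hw
        have hwval : w (inl i) = v (inl i) % v (inr i) := by
          simp only [hw, if_pos rfl]
          rw [Int.emod_def]; ring
        have hlt' : Nsum w < Nsum v := by
          have := emod_natAbs_lt hb hle
          have : w = fun p => if p = inl i then v (inl i) % v (inr i) else v p := by
            funext p; by_cases hp : p = inl i <;> simp [hw, hp, Int.emod_def] <;> ring
          rw [this]
          exact Nsum_update_lt v (inl i) _ (emod_natAbs_lt hb hle)
        obtain ⟨w', hr, hok⟩ := ih w (by omega)
        exact ⟨w', hstep.trans hr, hok⟩
      · -- reduce b_i mod a_i
        have hstep := reach_addB i (-(v (inr i) / v (inl i))) v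
        set w := fun p => if p = inr i then v p + -(v (inr i) / v (inl i)) * v (inl i) else v p
          with hw
        have hlt' : Nsum w < Nsum v := by
          have : w = fun p => if p = inr i then v (inr i) % v (inl i) else v p := by
            funext p; by_cases hp : p = inr i <;> simp [hw, hp, Int.emod_def] <;> ring
          rw [this]
          exact Nsum_update_lt v (inr i) _ (emod_natAbs_lt ha (le_of_lt hlt))
        obtain ⟨w', hr, hok⟩ := ih w (by omega)
        exact ⟨w', hstep.trans hr, hok⟩

lemma phase2 (n : ℕ) : ∀ v : (Fin g ⊕ Fin g) → ℤ, (∀ i, v (inl i) = 0 ∨ v (inr i) = 0) →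
    (Finset.univ.filter (fun i => v (inr i) ≠ 0)).card ≤ n →
    ∃ w, Reach g v w ∧ ∀ i, w (inr i) = 0 := by
  induction n with
  | zero =>
    intro v hpair hcard
    refine ⟨v, Reach.refl v, fun i => ?_⟩
    by_contra hne
    have : i ∈ Finset.univ.filter (fun i => v (inr i) ≠ 0) := by
      simp [hne]
    have := Finset.card_pos.mpr ⟨i, this⟩
    omega
  | succ n ih =>
    intro v hpair hcard
    by_cases hall : ∀ i, v (inr i) = 0
    · exact ⟨v, Reach.refl v, hall⟩
    · push_neg at hall
      obtain ⟨i, hbne⟩ := hall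
      have hai : v (inl i) = 0 := (hpair i).resolve_right hbne
      have hstep := reach_rot i v
      set w := fun p => if p = inl i then -v (inr i) else if p = inr i then v (inl i) else v p
        with hw
      have hwpair : ∀ j, w (inl j) = 0 ∨ w (inr j) = 0 := by
        intro j
        by_cases hj : j = i
        · subst hj; right; simp [hw, hai]
        · have h1 : w (inl j) = v (inl j) := by
            simp [hw, hj]
          have h2 : w (inr j) = v (inr j) := by
            simp [hw, hj]
          rw [h1, h2]; exact hpair j
      have hsub : Finset.univ.filter (fun j => w (inr j) ≠ 0)
          ⊆ (Finset.univ.filter (fun j => v (inr j) ≠ 0)).erase i := by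
        intro j hj
        simp only [Finset.mem_filter, Finset.mem_univ, true_and] at hj
        by_cases hji : j = i
        · subst hji; exfalso; apply hj; simp [hw, hai]
        · rw [Finset.mem_erase]
          have : w (inr j) = v (inr j) := by simp [hw, hji]
          rw [this] at hj
          simp [hji, hj]
      have hcard' : (Finset.univ.filter (fun j => w (inr j) ≠ 0)).card ≤ n := by
        have h1 := Finset.card_le_card hsub
        have h2 : i ∈ Finset.univ.filter (fun j => v (inr j) ≠ 0) := by simp [hbne]
        have h3 := Finset.card_erase_of_mem h2
        have h4 := Finset.card_pos.mpr ⟨i, h2⟩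
        omega
      obtain ⟨w', hr, hok⟩ := ih w hwpair hcard'
      exact ⟨w', hstep.trans hr, hok⟩

lemma phase3 (n : ℕ) : ∀ v : (Fin g ⊕ Fin g) → ℤ, (∀ i, v (inr i) = 0) → Nsum v ≤ n →
    ∃ w, Reach g v w ∧ (∀ i, w (inr i) = 0) ∧
      ∀ i j, i ≠ j → w (inl i) = 0 ∨ w (inl j) = 0 := by
  induction n with
  | zero =>
    intro v hb hn
    refine ⟨v, Reach.refl v, hb, fun i j _ => Or.inl ?_⟩
    have : (v (inl i)).natAbs ≤ Nsum v := Finset.single_le_sum (f := fun p => (v p).natAbs)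
      (fun p _ => Nat.zero_le _) (Finset.mem_univ _)
    omega
  | succ n ih =>
    intro v hb hn
    by_cases hall : ∀ i j, i ≠ j → v (inl i) = 0 ∨ v (inl j) = 0
    · exact ⟨v, Reach.refl v, hb, hall⟩
    · push_neg at hall
      obtain ⟨i, j, hij, hi, hj⟩ := hall
      rcases le_or_gt (v (inl j)).natAbs (v (inl i)).natAbs with hle | hlt
      · have hstep := reach_cross i j hij (-(v (inl i) / v (inl j))) v (hb i)
        set w := fun p => if p = inl i then v p + -(v (inl i) / v (inl j)) * v (inl j) else v p
          with hw
        have hwb : ∀ k, w (inr k) = 0 := by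
          intro k; simp [hw, hb k]
        have hlt' : Nsum w < Nsum v := by
          have : w = fun p => if p = inl i then v (inl i) % v (inl j) else v p := by
            funext p; by_cases hp : p = inl i <;> simp [hw, hp, Int.emod_def] <;> ring
          rw [this]
          exact Nsum_update_lt v (inl i) _ (emod_natAbs_lt hj hle)
        obtain ⟨w', hr, hok⟩ := ih w hwb (by omega)
        exact ⟨w', hstep.trans hr, hok⟩
      · have hstep := reach_cross j i hij.symm (-(v (inl j) / v (inl i))) v (hb j)
        set w := fun p => if p = inl j then v p + -(v (inl j) / v (inl i)) * v (inl i) else v p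
          with hw
        have hwb : ∀ k, w (inr k) = 0 := by
          intro k; simp [hw, hb k]
        have hlt' : Nsum w < Nsum v := by
          have : w = fun p => if p = inl j then v (inl j) % v (inl i) else v p := by
            funext p; by_cases hp : p = inl j <;> simp [hw, hp, Int.emod_def] <;> ring
          rw [this]
          exact Nsum_update_lt v (inl j) _ (emod_natAbs_lt hi (le_of_lt hlt))
        obtain ⟨w', hr, hok⟩ := ih w hwb (by omega)
        exact ⟨w', hstep.trans hr, hok⟩

lemma phase4 (hg : 1 ≤ g) (v : (Fin g ⊕ Fin g) → ℤ) (hb : ∀ i, v (inr i) = 0)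
    (hone : ∀ i j, i ≠ j → v (inl i) = 0 ∨ v (inl j) = 0)
    (hprim : ∃ z, z ⬝ᵥ v = 1) :
    Reach g v (Pi.single (inl (⟨0, hg⟩ : Fin g)) 1) := by
  obtain ⟨z, hz⟩ := hprim
  -- find the nonzero coordinate
  have hex : ∃ k, v (inl k) ≠ 0 := by
    by_contra hno
    push_neg at hno
    have : v = 0 := by
      funext p; rcases p with a | b
      · exact hno a
      · exact hb b
    rw [this] at hz
    simp at hz
  obtain ⟨k, hk⟩ := hex
  have hrest : ∀ j, j ≠ k → v (inl j) = 0 := fun j hj => ((hone j k hj).resolve_right hk)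
  have hvform : v = fun p => if p = inl k then v (inl k) else 0 := by
    funext p; rcases p with a | b
    · by_cases ha : a = k
      · subst ha; simp
      · simp [ha, hrest a ha, (fun h => ha (Sum.inl.injEq a k ▸ h))]
    · simp [hb b]
  have hunit : v (inl k) = 1 ∨ v (inl k) = -1 := by
    have : z (inl k) * v (inl k) = 1 := by
      rw [hvform] at hz
      rw [← hz]
      unfold dotProduct
      rw [← Finset.add_sum_erase _ _ (Finset.mem_univ (inl k))]
      simp only [if_pos rfl]
      have : ∀ p ∈ Finset.univ.erase (inl k),
          z p * (if p = inl k then v (inl k) else 0) = 0 := by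
        intro p hp
        rw [if_neg (Finset.ne_of_mem_erase hp)]
        ring
      rw [Finset.sum_congr rfl this]
      simp
    have h1 : v (inl k) ∣ 1 := Dvd.intro_left _ this
    exact Int.isUnit_iff.mp (isUnit_of_dvd_one h1)
  -- reach the state uk = single (inl k) 1
  have huk : Reach g v (Pi.single (inl k) 1) := by
    rcases hunit with h1 | h1
    · rw [hvform, h1]
      have : (fun p : Fin g ⊕ Fin g => if p = inl k then (1:ℤ) else 0) = Pi.single (inl k) 1 := by
        funext p; simp [Pi.single_apply, eq_comm]
      rw [← this]
      exact Reach.refl _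
    · -- rotate twice
      have hs1 := reach_rot k v
      set v1 := fun p => if p = inl k then -v (inr k) else if p = inr k then v (inl k) else v p
        with hv1
      have hs2 := reach_rot k v1
      set v2 := fun p => if p = inl k then -v1 (inr k) else if p = inr k then v1 (inl k) else v1 p
        with hv2
      have : v2 = Pi.single (inl k) 1 := by
        funext p
        rcases p with a | bb
        · by_cases ha : a = k
          · subst ha; simp [hv2, hv1, h1, hb, Pi.single_apply]
          · have := hrest a ha
            simp [hv2, hv1, ha, this, hb, Pi.single_apply]
        · by_cases hbb : bb = k
          · subst hbb; simp [hv2, hv1, hb, Pi.single_apply]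
          · simp [hv2, hv1, hbb, hb, Pi.single_apply]
      exact hs1.trans (this ▸ hs2)
  -- now move from k to 0
  set i0 : Fin g := ⟨0, hg⟩ with hi0
  by_cases hk0 : k = i0
  · subst hk0; exact huk
  · set u : (Fin g ⊕ Fin g) → ℤ := Pi.single (inl k) 1 with hu
    have hu_inr : u (inr i0) = 0 := by simp [hu, Pi.single_apply]
    have hs3 := reach_cross i0 k (fun h => hk0 h.symm) 1 u hu_inr
    set u1 := fun p => if p = inl i0 then u p + 1 * u (inl k) else u p with hu1
    have hu1_inr : u1 (inr k) = 0 := by simp [hu1, hu, Pi.single_apply]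
    have hs4 := reach_cross k i0 hk0 (-1) u1 hu1_inr
    set u2 := fun p => if p = inl k then u1 p + (-1) * u1 (inl i0) else u1 p with hu2
    have hk0' : ¬ i0 = k := fun h => hk0 h.symm
    have : u2 = Pi.single (inl i0) 1 := by
      funext p
      rcases p with a | bb
      · by_cases ha : a = k
        · subst ha
          simp [hu2, hu1, hu, Pi.single_apply, hk0, hk0']
        · by_cases ha0 : a = i0
          · subst ha0
            simp [hu2, hu1, hu, Pi.single_apply, ha, hk0, hk0', Ne.symm ha]
          · simp [hu2, hu1, hu, Pi.single_apply, ha, ha0, Ne.symm ha, Ne.symm ha0]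
      · simp [hu2, hu1, hu, Pi.single_apply]
    exact huk.trans (hs3.trans (this ▸ hs4))

theorem prim_reach (hg : 1 ≤ g) (v : (Fin g ⊕ Fin g) → ℤ) (hprim : ∃ z, z ⬝ᵥ v = 1) :
    Reach g v (Pi.single (inl (⟨0, hg⟩ : Fin g)) 1) := by
  obtain ⟨w1, hr1, hp1⟩ := phase1 (Nsum v) v le_rfl
  obtain ⟨w2, hr2, hp2⟩ := phase2 (Finset.univ.filter (fun i => w1 (inr i) ≠ 0)).card w1 hp1 le_rfl
  obtain ⟨w3, hr3, hp3, hp4⟩ := phase3 (Nsum w2) w2 hp2 le_rfl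
  have hr := (hr1.trans hr2).trans hr3
  exact hr.trans (phase4 hg w3 hp3 hp4 (IsPrimreach hr hprim))

lemma bezout_finset {ι : Type*} [DecidableEq ι] (s : Finset ι) (v : ι → ℤ) :
    ∃ z : ι → ℤ, ∑ q ∈ s, z q * v q = s.gcd v := by
  induction s using Finset.induction with
  | empty => exact ⟨0, by simp⟩
  | insert a s ha ih =>
    obtain ⟨z, hz⟩ := ih
    rw [Finset.gcd_insert]
    have hrep : (Int.gcd (v a) (s.gcd v) : ℤ)
        = v a * Int.gcdA (v a) (s.gcd v) + (s.gcd v) * Int.gcdB (v a) (s.gcd v) :=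
      Int.gcd_eq_gcd_ab _ _
    refine ⟨fun q => if q = a then Int.gcdA (v a) (s.gcd v)
      else z q * Int.gcdB (v a) (s.gcd v), ?_⟩
    rw [Finset.sum_insert ha]
    simp only [if_pos trivial]
    have : ∀ q ∈ s, (if q = a then Int.gcdA (v a) (s.gcd v)
        else z q * Int.gcdB (v a) (s.gcd v)) * v q
        = (z q * v q) * Int.gcdB (v a) (s.gcd v) := by
      intro q hq
      rw [if_neg (by rintro rfl; exact ha hq)]
      ring
    have hsum : ∑ x ∈ s, (fun q => if q = a then Int.gcdA (v a) (s.gcd v)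
        else z q * Int.gcdB (v a) (s.gcd v)) x * v x
        = ∑ q ∈ s, (z q * v q) * Int.gcdB (v a) (s.gcd v) := Finset.sum_congr rfl this
    rw [hsum, ← Finset.sum_mul, hz]
    have hgcd : GCDMonoid.gcd (v a) (s.gcd v) = (Int.gcd (v a) (s.gcd v) : ℤ) := by
      rw [Int.coe_gcd]
    rw [hgcd, hrep]
    ring

lemma exists_prim_covector (hg : 1 ≤ g) (H : Submodule ℚ ((Fin g ⊕ Fin g) → ℚ))
    (hH : Module.finrank ℚ H = 2 * g - 1) :
    ∃ w : (Fin g ⊕ Fin g) → ℤ, (∃ z, z ⬝ᵥ w = 1) ∧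
      ∀ x, x ∈ H ↔ (fun q => (w q : ℚ)) ⬝ᵥ x = 0 := by
  have hV : Module.finrank ℚ ((Fin g ⊕ Fin g) → ℚ) = 2 * g := by
    rw [Module.finrank_fintype_fun_eq_card]
    simp [Fintype.card_sum]
    omega
  have hHlt : H < ⊤ := by
    rcases lt_or_eq_of_le (le_top : H ≤ ⊤) with h | h
    · exact h
    · exfalso
      have := finrank_top ℚ ((Fin g ⊕ Fin g) → ℚ)
      rw [← h] at this
      omega
  obtain ⟨φ, hφne, hφbot⟩ := Submodule.exists_dual_map_eq_bot_of_lt_top hHlt inferInstance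
  have hker : H ≤ LinearMap.ker φ := by
    intro x hx
    rw [LinearMap.mem_ker]
    have : φ x ∈ H.map φ := Submodule.mem_map_of_mem hx
    rw [hφbot] at this
    simpa using this
  -- functional as covector
  set u : (Fin g ⊕ Fin g) → ℚ := fun q => φ (Pi.single q 1) with hu
  have hφu : ∀ x, φ x = u ⬝ᵥ x := by
    intro x
    conv_lhs => rw [pi_eq_sum_univ x]
    rw [map_sum]
    unfold dotProduct
    refine Finset.sum_congr rfl fun q _ => ?_
    have hsingle : (fun j => if q = j then (1:ℚ) else 0) = Pi.single q 1 := by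
      funext j; simp [Pi.single_apply, eq_comm]
    rw [hsingle, LinearMap.map_smul]
    simp [smul_eq_mul, mul_comm, hu]
  have hune : u ≠ 0 := by
    intro h0
    apply hφne
    refine LinearMap.ext fun x => ?_
    rw [hφu x, h0]
    simp
  -- integral covector
  set m : (Fin g ⊕ Fin g) → ℤ :=
    fun q => (u q).num * ∏ p ∈ Finset.univ.erase q, ((u p).den : ℤ) with hm
  set D : ℚ := ∏ p, ((u p).den : ℚ) with hD
  have hDne : D ≠ 0 := by
    rw [hD]
    exact Finset.prod_ne_zero_iff.mpr fun p _ => Nat.cast_ne_zero.mpr (u p).den_ne_zero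
  have hmcast : ∀ q, (m q : ℚ) = u q * D := by
    intro q
    have hden : ((u q).den : ℚ) ≠ 0 := Nat.cast_ne_zero.mpr (u q).den_ne_zero
    have hnum : ((u q).num : ℚ) = u q * ((u q).den : ℚ) := by
      have := Rat.num_div_den (u q)
      rw [div_eq_iff hden] at this
      exact this
    rw [hm]
    push_cast
    rw [hnum, hD, mul_assoc]
    congr 1
    exact Finset.mul_prod_erase Finset.univ (fun p => ((u p).den : ℚ)) (Finset.mem_univ q)
  have hmne : m ≠ 0 := by
    obtain ⟨q0, hq0⟩ := Function.ne_iff.mp hune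
    intro h0
    apply hq0
    have := hmcast q0
    rw [h0] at this
    simp only [Pi.zero_apply, Int.cast_zero] at this
    rcases mul_eq_zero.mp this.symm with h | h
    · exact h
    · exact absurd h hDne
  set d : ℤ := Finset.univ.gcd m with hd
  have hne : Nonempty (Fin g ⊕ Fin g) := ⟨inl ⟨0, hg⟩⟩
  obtain ⟨w, hmw, hwgcd⟩ := Finset.extract_gcd m Finset.univ_nonempty
  have hdne : d ≠ 0 := by
    rw [hd]
    intro h0
    apply hmne
    funext q
    exact Finset.gcd_eq_zero_iff.mp h0 q (Finset.mem_univ q)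
  refine ⟨w, ?_, ?_⟩
  · obtain ⟨z, hz⟩ := bezout_finset Finset.univ w
    exact ⟨z, by rw [← hwgcd]; exact hz⟩
  · -- membership
    have hwcast : ∀ q, (w q : ℚ) = (D / d) * u q := by
      intro q
      have h1 : m q = d * w q := hmw q (Finset.mem_univ q)
      have h2 : (d : ℚ) * (w q : ℚ) = u q * D := by
        have h3 := hmcast q
        rw [h1] at h3
        push_cast at h3
        linarith
      have hd' : (d : ℚ) ≠ 0 := Int.cast_ne_zero.mpr hdne
      field_simp
      linarith
    have hdot : ∀ x : (Fin g ⊕ Fin g) → ℚ,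
        (fun q => (w q : ℚ)) ⬝ᵥ x = (D / d) * φ x := by
      intro x
      rw [hφu x]
      unfold dotProduct
      rw [Finset.mul_sum]
      refine Finset.sum_congr rfl fun q _ => ?_
      show (w q : ℚ) * x q = D / (d : ℚ) * (u q * x q)
      rw [hwcast q]
      ring
    -- H = ker φ by dimension count
    have hkerfin : Module.finrank ℚ (LinearMap.ker φ) = 2 * g - 1 := by
      have hrr := LinearMap.finrank_range_add_finrank_ker φ
      have hrange : Module.finrank ℚ (LinearMap.range φ) = 1 := by
        have h1 : Module.finrank ℚ (LinearMap.range φ) ≤ 1 := by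
          have := Submodule.finrank_le (LinearMap.range φ)
          simpa [Module.finrank_self] using this
        have h2 : LinearMap.range φ ≠ ⊥ := fun h0 => hφne (LinearMap.range_eq_bot.mp h0)
        have h3 : Module.finrank ℚ (LinearMap.range φ) ≠ 0 :=
          fun h0 => h2 (Submodule.finrank_eq_zero.mp h0)
        omega
      rw [hrange, hV] at hrr
      omega
    have hHeq : H = LinearMap.ker φ := by
      apply Submodule.eq_of_le_of_finrank_eq hker
      rw [hH, hkerfin]
    intro x
    rw [hHeq, LinearMap.mem_ker, hdot x]
    constructor
    · intro h; rw [h]; ring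
    · intro h
      rcases mul_eq_zero.mp h with h1 | h1
      · exact absurd h1 (div_ne_zero hDne (Int.cast_ne_zero.mpr hdne))
      · exact h1

theorem Sp2gZ_transitive_on_hyperplanes (g : ℕ) (hg : 1 ≤ g)
    (H H' : Submodule ℚ ((Fin g ⊕ Fin g) → ℚ))
    (hH : Module.finrank ℚ H = 2 * g - 1) (hH' : Module.finrank ℚ H' = 2 * g - 1) :
    ∃ S ∈ Matrix.symplecticGroup (Fin g) ℤ,
      Submodule.map
        (Matrix.mulVecLin (S.map (fun x : ℤ => (x : ℚ))))
        H' = H := by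
  obtain ⟨w, hwprim, hwmem⟩ := exists_prim_covector hg H hH
  obtain ⟨w', hw'prim, hw'mem⟩ := exists_prim_covector hg H' hH'
  obtain ⟨T, hT, hTw⟩ := (prim_reach hg w hwprim).trans (prim_reach hg w' hw'prim).symm
  refine ⟨Tᵀ, SymplecticGroup.transpose_mem hT, ?_⟩
  set S := Tᵀ with hSdef
  have hS : S ∈ Matrix.symplecticGroup (Fin g) ℤ := SymplecticGroup.transpose_mem hT
  set cast : ℤ →+* ℚ := Int.castRingHom ℚ with hcast
  have hmap : ∀ M : Matrix (Fin g ⊕ Fin g) (Fin g ⊕ Fin g) ℤ,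
      M.map (fun x : ℤ => (x : ℚ)) = cast.mapMatrix M := fun M => rfl
  set Sq := S.map (fun x : ℤ => (x : ℚ)) with hSq
  set Tq := T.map (fun x : ℤ => (x : ℚ)) with hTq
  have hSqT : Sq = Tqᵀ := by
    rw [hSq, hTq, hSdef, Matrix.transpose_map]
  have cast_mulVec : ∀ (A : Matrix (Fin g ⊕ Fin g) (Fin g ⊕ Fin g) ℤ)
      (v : (Fin g ⊕ Fin g) → ℤ),
      (A.map (fun x : ℤ => (x:ℚ))).mulVec (fun q => (v q : ℚ))
        = fun q => ((A.mulVec v q : ℤ) : ℚ) := by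
    intro A v
    funext q
    simp only [mulVec, dotProduct, map_apply]
    push_cast
    rfl
  have key : ∀ x : (Fin g ⊕ Fin g) → ℚ,
      (fun q => (w q : ℚ)) ⬝ᵥ Sq.mulVec x = (fun q => (w' q : ℚ)) ⬝ᵥ x := by
    intro x
    rw [Matrix.dotProduct_mulVec, hSqT, Matrix.vecMul_transpose]
    have : Tq.mulVec (fun q => (w q : ℚ)) = fun q => (w' q : ℚ) := by
      rw [hTq, cast_mulVec T w, hTw]
    rw [this]
  -- inverse of Sq
  set B : Matrix (Fin g ⊕ Fin g) (Fin g ⊕ Fin g) ℤ :=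
    -Matrix.J (Fin g) ℤ * Sᵀ * Matrix.J (Fin g) ℤ with hB
  have hBS : B * S = 1 := by
    have := SymplecticGroup.inv_left_mul_aux hS
    calc B * S = -(Matrix.J (Fin g) ℤ * Sᵀ * Matrix.J (Fin g) ℤ * S) := by
          rw [hB]; simp [Matrix.neg_mul]
      _ = 1 := this
  have hSB : S * B = 1 := mul_eq_one_comm.mp hBS
  set Bq := B.map (fun x : ℤ => (x : ℚ)) with hBq
  have hSqBq : Sq * Bq = 1 := by
    rw [hSq, hBq, hmap, hmap, ← _root_.map_mul, hSB, _root_.map_one]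
  have hmulvec : ∀ y, Sq.mulVec (Bq.mulVec y) = y := by
    intro y
    rw [Matrix.mulVec_mulVec, hSqBq, Matrix.one_mulVec]
  ext y
  simp only [Submodule.mem_map, Matrix.mulVecLin_apply]
  constructor
  · rintro ⟨x, hx, rfl⟩
    rw [hwmem, key x]
    exact (hw'mem x).mp hx
  · intro hy
    refine ⟨Bq.mulVec y, ?_, hmulvec y⟩
    rw [hw'mem, ← key (Bq.mulVec y), hmulvec y]
    exact (hwmem y).mp hy
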